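/- Norm of a dual Horadam quaternion: for every natural number n, the product Ĝₙ · conj(Ĝₙ) (where conj is quaternion conjugation applied to both components of the dual quaternion) equals e₁ + e₂·ε, where e₁ = Σ_{i=0}^{3} w_{n+i}² = ( A²·α^{2n}·(1 + α² + α⁴ + α⁶) + B²·β^{2n}·(1 + β² + β⁴ + β⁶) − 2AB·(−q)ⁿ·(1 + (−q) + (−q)² + (−q)³) ) / (α − β)², and e₂ = 2·Σ_{i=0}^{3} w_{n+i}·w_{n+1+i}. -/

import Mathlib

open Quaternion DualNumber TrivSqZeroExt

/-- The Horadam sequence `w(a,b;p,q)`: `w₀ = a`, `w₁ = b`,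
`wₙ = p·wₙ₋₁ + q·wₙ₋₂` for `n ≥ 2`. -/
def horadam (a b p q : ℝ) : ℕ → ℝ
  | 0 => a
  | 1 => b
  | n + 2 => p * horadam a b p q (n + 1) + q * horadam a b p q n

/-- The `n`-th Horadam quaternion `Gₙ = wₙ + wₙ₊₁·i + wₙ₊₂·j + wₙ₊₃·k`. -/
def horadamQ (a b p q : ℝ) (n : ℕ) : ℍ[ℝ] :=
  ⟨horadam a b p q n, horadam a b p q (n + 1), horadam a b p q (n + 2), horadam a b p q (n + 3)⟩

/-- The `n`-th dual Horadam quaternion `Ĝₙ = Gₙ + Gₙ₊₁·ε`, an element of the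
dual numbers over `ℍ[ℝ]`, where `ε² = 0`. -/
noncomputable def dualHoradamQ (a b p q : ℝ) (n : ℕ) : DualNumber ℍ[ℝ] :=
  inl (horadamQ a b p q n) + inl (horadamQ a b p q (n + 1)) * ε

/-- The conjugate of a dual quaternion: quaternion conjugation applied to both
components, `conj(x + y·ε) = conj(x) + conj(y)·ε`. -/
noncomputable def dualConj (x : DualNumber ℍ[ℝ]) : DualNumber ℍ[ℝ] :=
  inl (star x.fst) + inl (star x.snd) * ε

/-- Structural computation of the product of a dual quaternion with its conjugate. -/
lemma dual_mul_conj_aux (x y : ℍ[ℝ]) (e₁ e₂ : ℝ) (h1 : x * star x = (e₁ : ℍ[ℝ]))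
    (h2 : x * star y + y * star x = (e₂ : ℍ[ℝ])) :
    (inl x + inl y * ε) * (inl (star x) + inl (star y) * ε) =
      inl (e₁ : ℍ[ℝ]) + inl ((e₂ : ℝ) : ℍ[ℝ]) * ε := by
  apply TrivSqZeroExt.ext
  · simpa using h1
  · simp only [DualNumber.snd_mul, fst_add, snd_add, fst_inl, snd_inl,
      fst_eps, snd_eps, mul_zero, zero_mul, add_zero, zero_add, mul_one]
    simpa using h2

/-- Norm of a dual Horadam quaternion: `Ĝₙ·conj(Ĝₙ) = e₁ + e₂·ε` with
`e₁ = Σ_{i=0}^{3} w_{n+i}²` (which has the stated Binet closed form) and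
`e₂ = 2·Σ_{i=0}^{3} w_{n+i}·w_{n+1+i}`. -/
theorem dualHoradamQ_norm (a b p q : ℝ) (hpq : p ^ 2 + 4 * q > 0)
    (α β A B : ℝ)
    (hα : α = (p + Real.sqrt (p ^ 2 + 4 * q)) / 2)
    (hβ : β = (p - Real.sqrt (p ^ 2 + 4 * q)) / 2)
    (hA : A = b - a * β) (hB : B = b - a * α) :
    ∀ n : ℕ,
      (dualHoradamQ a b p q n * dualConj (dualHoradamQ a b p q n) =
          inl ((((∑ i ∈ Finset.range 4, (horadam a b p q (n + i)) ^ 2) : ℝ) : ℍ[ℝ])) +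
            inl (((2 * ∑ i ∈ Finset.range 4,
                horadam a b p q (n + i) * horadam a b p q (n + 1 + i) : ℝ) : ℍ[ℝ])) * ε) ∧
      (∑ i ∈ Finset.range 4, (horadam a b p q (n + i)) ^ 2 =
          (A ^ 2 * α ^ (2 * n) * ∑ j ∈ Finset.range 4, α ^ (2 * j) +
            B ^ 2 * β ^ (2 * n) * ∑ j ∈ Finset.range 4, β ^ (2 * j) -
            2 * A * B * (-q) ^ n * ∑ j ∈ Finset.range 4, (-q) ^ j) / (α - β) ^ 2) := by
  -- basic facts about the roots
  have hD : Real.sqrt (p ^ 2 + 4 * q) ^ 2 = p ^ 2 + 4 * q := Real.sq_sqrt hpq.le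
  have hs : Real.sqrt (p ^ 2 + 4 * q) > 0 := Real.sqrt_pos.mpr hpq
  have hmul : α * β = -q := by rw [hα, hβ]; nlinarith [hD]
  have hsum : α + β = p := by rw [hα, hβ]; ring
  have hne : α - β ≠ 0 := by rw [hα, hβ]; intro h; nlinarith [hs]
  have hα2 : α ^ 2 = p * α + q := by linear_combination α * hsum - hmul
  have hβ2 : β ^ 2 = p * β + q := by linear_combination β * hsum - hmul
  -- Binet formula
  have key : ∀ m, horadam a b p q m * (α - β) = A * α ^ m - B * β ^ m ∧
      horadam a b p q (m + 1) * (α - β) = A * α ^ (m + 1) - B * β ^ (m + 1) := by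
    intro m
    induction m with
    | zero =>
      constructor
      · simp only [horadam, pow_zero]; rw [hA, hB]; ring
      · simp only [horadam, pow_one]; rw [hA, hB]; ring
    | succ k ih =>
      refine ⟨ih.2, ?_⟩
      have hak : α ^ (k + 2) = α ^ k * (p * α + q) := by rw [← hα2]; ring
      have hbk : β ^ (k + 2) = β ^ k * (p * β + q) := by rw [← hβ2]; ring
      calc horadam a b p q (k + 2) * (α - β)
          = p * (horadam a b p q (k + 1) * (α - β)) + q * (horadam a b p q k * (α - β)) := by
            rw [horadam]; ring
        _ = p * (A * α ^ (k + 1) - B * β ^ (k + 1)) + q * (A * α ^ k - B * β ^ k) := by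
            rw [ih.1, ih.2]
        _ = A * α ^ (k + 2) - B * β ^ (k + 2) := by rw [hak, hbk]; ring
  have hw : ∀ m, horadam a b p q m = (A * α ^ m - B * β ^ m) / (α - β) := fun m =>
    (eq_div_iff hne).mpr (key m).1
  intro n
  constructor
  · -- the norm computation
    have h1 : horadamQ a b p q n * star (horadamQ a b p q n) =
        (((∑ i ∈ Finset.range 4, (horadam a b p q (n + i)) ^ 2 : ℝ)) : ℍ[ℝ]) := by
      simp only [Finset.sum_range_succ, Finset.sum_range_zero, zero_add]
      ext <;>
        simp only [Quaternion.re_mul, Quaternion.imI_mul, Quaternion.imJ_mul, Quaternion.imK_mul,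
          Quaternion.re_star, Quaternion.imI_star, Quaternion.imJ_star, Quaternion.imK_star] <;>
        simp [horadamQ, ← Quaternion.coe_pow, Quaternion.re_mul, Quaternion.imI_mul,
          Quaternion.imJ_mul, Quaternion.imK_mul] <;> ring
    have h2 : horadamQ a b p q n * star (horadamQ a b p q (n + 1)) +
        horadamQ a b p q (n + 1) * star (horadamQ a b p q n) =
        (((2 * ∑ i ∈ Finset.range 4,
            horadam a b p q (n + i) * horadam a b p q (n + 1 + i) : ℝ)) : ℍ[ℝ]) := by
      simp only [Finset.sum_range_succ, Finset.sum_range_zero, zero_add]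
      ext <;>
        simp only [Quaternion.re_add, Quaternion.imI_add, Quaternion.imJ_add, Quaternion.imK_add,
          Quaternion.re_mul, Quaternion.imI_mul, Quaternion.imJ_mul, Quaternion.imK_mul,
          Quaternion.re_star, Quaternion.imI_star, Quaternion.imJ_star, Quaternion.imK_star] <;>
        simp [horadamQ, Quaternion.re_mul, Quaternion.imI_mul,
          Quaternion.imJ_mul, Quaternion.imK_mul] <;> ring
    have hconj : dualConj (dualHoradamQ a b p q n) =
        inl (star (horadamQ a b p q n)) + inl (star (horadamQ a b p q (n + 1))) * ε := by
      simp [dualConj, dualHoradamQ]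
    rw [hconj, dualHoradamQ]
    exact dual_mul_conj_aux _ _ _ _ h1 h2
  · -- the Binet closed form of e₁
    simp only [Finset.sum_range_succ, Finset.sum_range_zero, zero_add, hw, ← hmul]
    field_simp
    ring
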